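/- Let a₁, a₂ > 0 with a₁ + a₂ < π/2, and let S_a(x,y) = (cos 2a)/(2 sin 2a)(x² + y²) − xy/(sin 2a). Then for all q₁, q₃ ∈ ℝ, the function g(q₂) = S_{a₁}(q₁, q₂) + S_{a₂}(q₂, q₃) has a unique critical point q₂* ∈ ℝ, and g(q₂*) = S_{a₁+a₂}(q₁, q₃). -/

import Mathlib

open Real

theorem stmt_18 (a₁ a₂ : ℝ) (h₁ : 0 < a₁) (h₂ : 0 < a₂) (h : a₁ + a₂ < Real.pi / 2)
    (S : ℝ → ℝ → ℝ → ℝ)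
    (hS : ∀ a x y, S a x y =
      Real.cos (2 * a) / (2 * Real.sin (2 * a)) * (x ^ 2 + y ^ 2)
        - x * y / Real.sin (2 * a))
    (q₁ q₃ : ℝ) :
    (∃! c : ℝ, deriv (fun q₂ => S a₁ q₁ q₂ + S a₂ q₂ q₃) c = 0) ∧
    (∀ c : ℝ, deriv (fun q₂ => S a₁ q₁ q₂ + S a₂ q₂ q₃) c = 0 →
      S a₁ q₁ c + S a₂ c q₃ = S (a₁ + a₂) q₁ q₃) := by
  set s₁ := Real.sin (2 * a₁) with hs1
  set s₂ := Real.sin (2 * a₂) with hs2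
  set c₁ := Real.cos (2 * a₁) with hc1
  set c₂ := Real.cos (2 * a₂) with hc2
  have hpi : (0:ℝ) < Real.pi := Real.pi_pos
  have hs1pos : 0 < s₁ := Real.sin_pos_of_pos_of_lt_pi (by linarith) (by linarith)
  have hs2pos : 0 < s₂ := Real.sin_pos_of_pos_of_lt_pi (by linarith) (by linarith)
  have hSg : Real.sin (2 * (a₁ + a₂)) = s₁ * c₂ + c₁ * s₂ := by
    rw [hs1, hs2, hc1, hc2, show 2 * (a₁ + a₂) = 2 * a₁ + 2 * a₂ by ring, Real.sin_add]
  have hC : Real.cos (2 * (a₁ + a₂)) = c₁ * c₂ - s₁ * s₂ := by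
    rw [hs1, hs2, hc1, hc2, show 2 * (a₁ + a₂) = 2 * a₁ + 2 * a₂ by ring, Real.cos_add]
  have hSgpos : 0 < s₁ * c₂ + c₁ * s₂ := by
    rw [← hSg]
    exact Real.sin_pos_of_pos_of_lt_pi (by linarith) (by linarith)
  have hp1 : s₁ ^ 2 + c₁ ^ 2 = 1 := Real.sin_sq_add_cos_sq _
  have hp2 : s₂ ^ 2 + c₂ ^ 2 = 1 := Real.sin_sq_add_cos_sq _
  have key : ∀ c : ℝ, deriv (fun q₂ => S a₁ q₁ q₂ + S a₂ q₂ q₃) c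
      = 2 * (c₁ / (2 * s₁) + c₂ / (2 * s₂)) * c - q₁ / s₁ - q₃ / s₂ := by
    intro c
    have hfun : (fun q₂ => S a₁ q₁ q₂ + S a₂ q₂ q₃)
        = fun x => (c₁ / (2 * s₁) * (q₁ ^ 2 + x ^ 2) - q₁ * x / s₁)
          + (c₂ / (2 * s₂) * (x ^ 2 + q₃ ^ 2) - x * q₃ / s₂) := by
      funext x; rw [hS, hS]
    rw [hfun]
    have hx : HasDerivAt (fun x : ℝ => x) 1 c := hasDerivAt_id c
    have hx2 : HasDerivAt (fun x : ℝ => x ^ 2) (2 * c) c := by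
      simpa using hasDerivAt_pow 2 c
    have h1 : HasDerivAt (fun x : ℝ => c₁ / (2 * s₁) * (q₁ ^ 2 + x ^ 2) - q₁ * x / s₁)
        (c₁ / (2 * s₁) * (2 * c) - q₁ / s₁) c := by
      have := (((hasDerivAt_const c (q₁ ^ 2)).add hx2).const_mul (c₁ / (2 * s₁))).sub
        ((hx.const_mul q₁).div_const s₁)
      exact this.congr_deriv (by ring)
    have h2 : HasDerivAt (fun x : ℝ => c₂ / (2 * s₂) * (x ^ 2 + q₃ ^ 2) - x * q₃ / s₂)
        (c₂ / (2 * s₂) * (2 * c) - q₃ / s₂) c := by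
      have := ((hx2.add (hasDerivAt_const c (q₃ ^ 2))).const_mul (c₂ / (2 * s₂))).sub
        ((hx.mul_const q₃).div_const s₂)
      exact this.congr_deriv (by ring)
    refine (h1.add h2).deriv.trans ?_
    ring
  have hK : c₁ / (2 * s₁) + c₂ / (2 * s₂) = (s₁ * c₂ + c₁ * s₂) / (2 * s₁ * s₂) := by
    field_simp; ring
  have hKne : c₁ / (2 * s₁) + c₂ / (2 * s₂) ≠ 0 := by
    rw [hK]; positivity
  have h2Kne : (2 : ℝ) * (c₁ / (2 * s₁) + c₂ / (2 * s₂)) ≠ 0 := mul_ne_zero two_ne_zero hKne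
  constructor
  · refine ⟨(q₁ / s₁ + q₃ / s₂) / (2 * (c₁ / (2 * s₁) + c₂ / (2 * s₂))), ?_, ?_⟩
    · show deriv (fun q₂ => S a₁ q₁ q₂ + S a₂ q₂ q₃) _ = 0
      rw [key, mul_div_cancel₀ _ h2Kne]; ring
    · intro y hy
      rw [key] at hy
      rw [eq_div_iff h2Kne]
      linarith
  · intro c hc
    rw [key] at hc
    have hcc : c * (s₁ * c₂ + c₁ * s₂) = q₁ * s₂ + q₃ * s₁ := by
      have h1 : 2 * (c₁ / (2 * s₁) + c₂ / (2 * s₂)) * c = q₁ / s₁ + q₃ / s₂ := by linarith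
      rw [hK] at h1
      field_simp at h1
      exact mul_right_cancel₀ (show (2 * s₁ * s₂ : ℝ) ≠ 0 by positivity)
        (by linear_combination (2 * s₁ * s₂) * h1)
    rw [hS, hS, hS, hSg, hC]
    rw [← hs1, ← hs2, ← hc1, ← hc2]
    field_simp
    linear_combination (q₁ ^ 2 * s₂ ^ 2 * hp1 + q₃ ^ 2 * s₁ ^ 2 * hp2 + (c * (s₁ * c₂ + c₁ * s₂) - (q₁ * s₂ + q₃ * s₁)) * hcc)
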